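/- Every vector f in a linear subspace S ⊆ ℝ^R is a conformal sum of elementary vectors of S: there exists a finite set E of elementary vectors of S, each conforming to f (i.e. σ(e) ≤ σ(f) componentwise in the sign partial order), such that f = Σ_{e∈E} e. -/
import Mathlib


/-- An elementary vector of a subspace: a nonzero element with inclusion-minimal
support among nonzero elements of the subspace. -/
def IsEV {R : Type*} (S : Submodule ℝ (R → ℝ)) (e : R → ℝ) : Prop :=
  e ∈ S ∧ e ≠ 0 ∧
    ∀ g ∈ S, g ≠ 0 → Function.support g ⊆ Function.support e →
      Function.support g = Function.support e

/-- `x` conforms to `y`: componentwise, `σ(x) ≤ σ(y)` in the sign partial order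
generated by `0 < -` and `0 < +`. -/
def Conforms {R : Type*} (x y : R → ℝ) : Prop :=
  ∀ r, x r = 0 ∨ (0 < x r ∧ 0 < y r) ∨ (x r < 0 ∧ y r < 0)

section Aux

variable {R : Type*}

lemma conforms_self (f : R → ℝ) : Conforms f f := by
  intro r
  rcases lt_trichotomy (f r) 0 with h | h | h
  · exact Or.inr (Or.inr ⟨h, h⟩)
  · exact Or.inl h
  · exact Or.inr (Or.inl ⟨h, h⟩)

lemma conforms_trans {x y z : R → ℝ} (hxy : Conforms x y) (hyz : Conforms y z) :
    Conforms x z := by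
  intro r
  rcases hxy r with h | ⟨hx, hy⟩ | ⟨hx, hy⟩
  · exact Or.inl h
  · rcases hyz r with h' | ⟨hy', hz⟩ | ⟨hy', hz⟩
    · exact absurd h' (ne_of_gt hy)
    · exact Or.inr (Or.inl ⟨hx, hz⟩)
    · exact absurd hy' (not_lt_of_gt hy)
  · rcases hyz r with h' | ⟨hy', hz⟩ | ⟨hy', hz⟩
    · exact absurd h' (ne_of_lt hy)
    · exact absurd hy' (not_lt_of_gt hy)
    · exact Or.inr (Or.inr ⟨hx, hz⟩)

lemma conforms_support {x y : R → ℝ} (h : Conforms x y) :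
    Function.support x ⊆ Function.support y := by
  intro r hr
  rcases h r with h0 | ⟨_, hy⟩ | ⟨_, hy⟩
  · exact absurd h0 hr
  · exact ne_of_gt hy
  · exact ne_of_lt hy

lemma conforms_smul {x y : R → ℝ} (h : Conforms x y) {t : ℝ} (ht : 0 < t) :
    Conforms (t • x) y := by
  intro r
  rcases h r with h0 | ⟨hx, hy⟩ | ⟨hx, hy⟩
  · exact Or.inl (by simp [h0])
  · exact Or.inr (Or.inl ⟨by simpa using mul_pos ht hx, hy⟩)
  · exact Or.inr (Or.inr ⟨by simpa using mul_neg_of_pos_of_neg ht hx, hy⟩)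

lemma support_smul_eq {t : ℝ} (ht : t ≠ 0) (x : R → ℝ) :
    Function.support (t • x) = Function.support x := by
  ext r
  simp [Function.mem_support, mul_ne_zero_iff, ht]

lemma isEV_smul {S : Submodule ℝ (R → ℝ)} {e : R → ℝ} (he : IsEV S e)
    {t : ℝ} (ht : t ≠ 0) : IsEV S (t • e) := by
  obtain ⟨heS, he0, hmin⟩ := he
  refine ⟨S.smul_mem t heS, smul_ne_zero ht he0, ?_⟩
  intro g hg hg0 hsub
  rw [support_smul_eq ht] at hsub ⊢
  exact hmin g hg hg0 hsub

/-- The key subtraction step: if `g` has support inside that of `f` and agrees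
in sign with `f` somewhere, then for a suitable `t > 0`, `f - t • g` conforms
to `f` and vanishes at some point of the support of `g`. -/
lemma step [Fintype R] (f g : R → ℝ)
    (hsupp : Function.support g ⊆ Function.support f)
    (r0 : R) (hr0 : 0 < g r0 * f r0) :
    ∃ t : ℝ, 0 < t ∧ Conforms (f - t • g) f ∧ ∃ r, g r ≠ 0 ∧ (f - t • g) r = 0 := by
  classical
  set P : Finset R := Finset.univ.filter (fun r => 0 < g r * f r) with hP
  have hr0P : r0 ∈ P := by simp [hP, hr0]
  obtain ⟨rs, hrsP, hmin⟩ := P.exists_min_image (fun r => f r / g r) ⟨r0, hr0P⟩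
  have hrs : 0 < g rs * f rs := by simpa [hP] using hrsP
  have hgrs : g rs ≠ 0 := by
    intro h; rw [h] at hrs; simp at hrs
  set t : ℝ := f rs / g rs with htdef
  have ht : 0 < t := by
    rw [htdef, div_pos_iff]
    rcases mul_pos_iff.mp hrs with ⟨h1, h2⟩ | ⟨h1, h2⟩
    · exact Or.inl ⟨h2, h1⟩
    · exact Or.inr ⟨h2, h1⟩
  refine ⟨t, ht, ?_, rs, hgrs, ?_⟩
  · intro r
    by_cases hg : g r = 0
    · have : (f - t • g) r = f r := by simp [hg]
      rw [this]
      rcases lt_trichotomy (f r) 0 with h | h | h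
      · exact Or.inr (Or.inr ⟨h, h⟩)
      · exact Or.inl h
      · exact Or.inr (Or.inl ⟨h, h⟩)
    · have hf : f r ≠ 0 := hsupp hg
      have hval : (f - t • g) r = f r - t * g r := by simp
      rcases (mul_ne_zero hg hf).lt_or_gt with hneg | hpos
      · -- opposite signs: subtracting strengthens the sign of f r
        rcases mul_neg_iff.mp hneg with ⟨h1, h2⟩ | ⟨h1, h2⟩
        · -- g r > 0, f r < 0
          refine Or.inr (Or.inr ⟨?_, h2⟩)
          rw [hval]
          have : 0 < t * g r := mul_pos ht h1
          linarith
        · -- g r < 0, f r > 0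
          refine Or.inr (Or.inl ⟨?_, h2⟩)
          rw [hval]
          have : t * g r < 0 := mul_neg_of_pos_of_neg ht h1
          linarith
      · -- same signs: t ≤ f r / g r
        have hrP : r ∈ P := by simp [hP, hpos]
        have hle : t ≤ f r / g r := hmin r hrP
        rcases mul_pos_iff.mp hpos with ⟨h1, h2⟩ | ⟨h1, h2⟩
        · -- g r > 0, f r > 0
          have : t * g r ≤ f r := (le_div_iff₀ h1).mp hle
          rcases eq_or_lt_of_le this with heq | hlt
          · exact Or.inl (by rw [hval]; linarith)
          · exact Or.inr (Or.inl ⟨by rw [hval]; linarith, h2⟩)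
        · -- g r < 0, f r < 0
          have : f r ≤ t * g r := by
            have hmm := mul_le_mul_of_nonpos_right hle (le_of_lt h1)
            rwa [div_mul_cancel₀ _ (ne_of_lt h1)] at hmm
          rcases eq_or_lt_of_le this with heq | hlt
          · exact Or.inl (by rw [hval]; linarith)
          · exact Or.inr (Or.inr ⟨by rw [hval]; linarith, h2⟩)
  · have : (f - t • g) rs = f rs - t * g rs := by simp
    rw [this, htdef, div_mul_cancel₀ _ hgrs, sub_self]

/-- Existence of a conformal elementary vector. -/
lemma exists_conformal_ev [Fintype R] (S : Submodule ℝ (R → ℝ)) :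
    ∀ n : ℕ, ∀ f ∈ S, f ≠ 0 → (Function.support f).ncard ≤ n →
      ∃ e, IsEV S e ∧ Conforms e f := by
  intro n
  induction n with
  | zero =>
    intro f hf hf0 hcard
    exfalso
    apply hf0
    have hfin : (Function.support f).Finite := Set.toFinite _
    have : Function.support f = ∅ := by
      rw [← Set.ncard_eq_zero hfin]; omega
    exact Function.support_eq_empty_iff.mp this
  | succ n ih =>
    intro f hf hf0 hcard
    by_cases hEV : ∀ g ∈ S, g ≠ 0 → Function.support g ⊆ Function.support f →
        Function.support g = Function.support f
    · exact ⟨f, ⟨hf, hf0, hEV⟩, conforms_self f⟩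
    · push_neg at hEV
      obtain ⟨g, hgS, hg0, hgsub, hgne⟩ := hEV
      obtain ⟨r0, hr0⟩ := Function.ne_iff.mp hg0
      have hr0' : g r0 ≠ 0 := by simpa using hr0
      have hfr0 : f r0 ≠ 0 := hgsub hr0'
      set g' : R → ℝ := if 0 < g r0 * f r0 then g else -g with hg'def
      have hg'S : g' ∈ S := by
        rw [hg'def]; split
        · exact hgS
        · exact S.neg_mem hgS
      have hg'supp : Function.support g' = Function.support g := by
        rw [hg'def]; split
        · rfl
        · exact Function.support_neg g
      have hg'r0 : 0 < g' r0 * f r0 := by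
        rw [hg'def]
        split
        · assumption
        · rename_i h
          have hne : g r0 * f r0 ≠ 0 := mul_ne_zero hr0' hfr0
          have : g r0 * f r0 < 0 := lt_of_le_of_ne (not_lt.mp h) hne
          simpa [neg_mul] using neg_pos.mpr this
      obtain ⟨t, ht, hconf, rs, hgrs, hhrs⟩ :=
        step f g' (hg'supp ▸ hgsub) r0 hg'r0
      set h : R → ℝ := f - t • g' with hhdef
      have hhS : h ∈ S := S.sub_mem hf (S.smul_mem t hg'S)
      have hh0 : h ≠ 0 := by
        intro habs
        apply hgne
        have : f = t • g' := by
          have := sub_eq_zero.mp habs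
          exact this
        rw [← hgsub.antisymm]
        rw [← hg'supp, ← support_smul_eq (ne_of_gt ht) g', ← this]
      have hsublt : Function.support h ⊂ Function.support f := by
        refine ⟨conforms_support hconf, ?_⟩
        intro hcon
        have hgrs' : g rs ≠ 0 := by
          rw [← Function.mem_support, ← hg'supp]; exact hgrs
        exact hcon (hgsub hgrs') hhrs
      have hcard' : (Function.support h).ncard ≤ n := by
        have := Set.ncard_lt_ncard hsublt (Set.toFinite _)
        omega
      obtain ⟨e, heEV, heconf⟩ := ih h hhS hh0 hcard'
      exact ⟨e, heEV, conforms_trans heconf hconf⟩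

lemma conformal_aux [Fintype R] (S : Submodule ℝ (R → ℝ)) :
    ∀ n : ℕ, ∀ f ∈ S, (Function.support f).ncard ≤ n →
      ∃ E : Finset (R → ℝ), (∀ e ∈ E, IsEV S e ∧ Conforms e f) ∧ f = ∑ e ∈ E, e := by
  intro n
  induction n with
  | zero =>
    intro f hf hcard
    have hfin : (Function.support f).Finite := Set.toFinite _
    have : Function.support f = ∅ := by
      rw [← Set.ncard_eq_zero hfin]; omega
    have hf0 : f = 0 := Function.support_eq_empty_iff.mp this
    exact ⟨∅, by simp, by simp [hf0]⟩
  | succ n ih =>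
    intro f hf hcard
    by_cases hf0 : f = 0
    · exact ⟨∅, by simp, by simp [hf0]⟩
    · obtain ⟨e, heEV, heconf⟩ := exists_conformal_ev S (n + 1) f hf hf0 hcard
      have heS := heEV.1
      have he0 := heEV.2.1
      have hesupp : Function.support e ⊆ Function.support f := conforms_support heconf
      obtain ⟨r0, hr0⟩ := Function.ne_iff.mp he0
      have hr0' : e r0 ≠ 0 := by simpa using hr0
      have her0 : 0 < e r0 * f r0 := by
        rcases heconf r0 with h0 | ⟨h1, h2⟩ | ⟨h1, h2⟩
        · exact absurd h0 hr0'
        · exact mul_pos h1 h2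
        · exact mul_pos_of_neg_of_neg h1 h2
      obtain ⟨t, ht, hconf, rs, hers, hhrs⟩ := step f e hesupp r0 her0
      set h : R → ℝ := f - t • e with hhdef
      have hhS : h ∈ S := S.sub_mem hf (S.smul_mem t heS)
      have hsublt : Function.support h ⊂ Function.support f := by
        refine ⟨conforms_support hconf, ?_⟩
        intro hcon
        exact hcon (hesupp hers) hhrs
      have hcard' : (Function.support h).ncard ≤ n := by
        have := Set.ncard_lt_ncard hsublt (Set.toFinite _)
        omega
      obtain ⟨E', hE', hsum⟩ := ih h hhS hcard'
      have hte_notmem : t • e ∉ E' := by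
        intro hmem
        have hconf' := (hE' _ hmem).2
        have : (t • e) rs = 0 := by
          by_contra hne
          exact (conforms_support hconf' hne) hhrs
        have : t * e rs = 0 := by simpa using this
        rcases mul_eq_zero.mp this with h1 | h1
        · exact (ne_of_gt ht) h1
        · exact hers h1
      refine ⟨insert (t • e) E', ?_, ?_⟩
      · intro x hx
        rcases Finset.mem_insert.mp hx with hx | hx
        · subst hx
          exact ⟨isEV_smul heEV (ne_of_gt ht), conforms_smul heconf ht⟩
        · exact ⟨(hE' x hx).1, conforms_trans (hE' x hx).2 hconf⟩
      · rw [Finset.sum_insert hte_notmem, ← hsum]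
        simp [hhdef]

end Aux

/-- Rockafellar: every vector of a subspace is a conformal sum of
elementary vectors of the subspace. -/
theorem conformal_sum_of_elementary_vectors {R : Type*} [Fintype R]
    (S : Submodule ℝ (R → ℝ)) (f : R → ℝ) (hf : f ∈ S) :
    ∃ E : Finset (R → ℝ), (∀ e ∈ E, IsEV S e ∧ Conforms e f) ∧
      f = ∑ e ∈ E, e := by
  exact conformal_aux S (Function.support f).ncard f hf le_rfl
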